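/- Fix an integer K > 2 and r₁ ∈ (0,1). For every r ∈ R_K(r₁), one has the upper bound p(r) ≤ 2(K − 2 + r₁) / (4(K − 2 + r₁) + 1 − K·r₁). -/

import Mathlib

/-- For `K > 2` and `r ∈ R_K(r₁)`, one has the upper bound
`p(r) ≤ 2(K−2+r₁)/(4(K−2+r₁)+1−K·r₁)` (names indexed by `0, …, K-1`,
with `n₁` corresponding to index `0`). -/
theorem p_le_upper_bound
    (K : ℕ) (hK : 2 < K) (r1 : ℝ) (hr1 : r1 ∈ Set.Ioo (0 : ℝ) 1)
    (r : ℕ → ℝ)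
    (hr : ∀ k < K, r k ∈ Set.Ioo (0 : ℝ) 1)
    (hsum : ∑ k ∈ Finset.range K, r k = 1)
    (hmono : ∀ i j, 1 ≤ i → i ≤ j → j < K → r j ≤ r i)
    (hfirst : r 0 = r1) :
    2 / (3 + ∑ k ∈ Finset.Ico 1 K, r k / (1 - r k))
      ≤ 2 * ((K : ℝ) - 2 + r1) / (4 * ((K : ℝ) - 2 + r1) + 1 - (K : ℝ) * r1) := by
  obtain ⟨h0, h1⟩ := hr1
  have hKr : (3:ℝ) ≤ (K:ℝ) := by exact_mod_cast hK
  have hd : (0:ℝ) < (K:ℝ) - 2 + r1 := by linarith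
  set m : ℝ := (1 - r1) / ((K:ℝ) - 1) with hm
  have hK1 : (1:ℝ) < (K:ℝ) := by linarith
  have hm0 : 0 < m := div_pos (by linarith) (by linarith)
  have hm1 : m < 1 := by
    rw [hm, div_lt_one (by linarith)]; linarith
  have h1m : (0:ℝ) < 1 - m := by linarith
  -- sum over Ico 1 K equals 1 - r1
  have hsum' : ∑ k ∈ Finset.Ico 1 K, r k = 1 - r1 := by
    have := Finset.sum_range_succ_comm r K
    have h : ∑ k ∈ Finset.range K, r k = r 0 + ∑ k ∈ Finset.Ico 1 K, r k := by
      rw [Finset.range_eq_Ico, ← Finset.sum_eq_sum_Ico_succ_bot (by omega : 0 < K)]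
    rw [h, hfirst] at hsum
    linarith
  -- tangent line bound
  have key : ∀ k ∈ Finset.Ico 1 K,
      m / (1 - m) + (r k - m) / (1 - m) ^ 2 ≤ r k / (1 - r k) := by
    intro k hk
    have hk' : k < K := (Finset.mem_Ico.mp hk).2
    obtain ⟨hx0, hx1⟩ := hr k hk'
    have h1x : (0:ℝ) < 1 - r k := by linarith
    rw [div_add_div _ _ (by positivity) (by positivity), div_le_div_iff₀ (by positivity) h1x]
    nlinarith [sq_nonneg (r k - m), sq_nonneg (1 - m), mul_pos h1m h1x]
  have card_eq : ((Finset.Ico 1 K).card : ℝ) = (K:ℝ) - 1 := by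
    rw [Nat.card_Ico]
    have : (1:ℕ) ≤ K := by omega
    push_cast [this]
    ring
  have hS : ((K:ℝ) - 1) * (m / (1 - m)) ≤ ∑ k ∈ Finset.Ico 1 K, r k / (1 - r k) := by
    calc ((K:ℝ) - 1) * (m / (1 - m))
        = ∑ k ∈ Finset.Ico 1 K, (m / (1 - m) + (r k - m) / (1 - m) ^ 2) := by
          rw [Finset.sum_add_distrib, Finset.sum_const, ← Finset.sum_div,
            Finset.sum_sub_distrib, Finset.sum_const, hsum', nsmul_eq_mul, nsmul_eq_mul,
            card_eq]
          have hKm : ((K:ℝ) - 1) * m = 1 - r1 := by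
            rw [hm, mul_comm, div_mul_cancel₀]
            linarith
          have : (1 - r1) - ((K:ℝ) - 1) * m = 0 := by linarith
          rw [this]
          simp
      _ ≤ ∑ k ∈ Finset.Ico 1 K, r k / (1 - r k) := Finset.sum_le_sum key
  have hmval : m / (1 - m) = (1 - r1) / ((K:ℝ) - 2 + r1) := by
    have hKne : (K:ℝ) - 1 ≠ 0 := by linarith
    rw [div_eq_div_iff h1m.ne' hd.ne', hm]
    field_simp
    ring
  have hq0 : (0:ℝ) < m / (1 - m) := div_pos hm0 h1m
  have hpos : (0:ℝ) < 3 + ((K:ℝ) - 1) * (m / (1 - m)) := by nlinarith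
  have step : 2 / (3 + ∑ k ∈ Finset.Ico 1 K, r k / (1 - r k))
      ≤ 2 / (3 + ((K:ℝ) - 1) * (m / (1 - m))) := by
    apply div_le_div_of_nonneg_left (by norm_num) hpos
    linarith
  refine step.trans (le_of_eq ?_)
  rw [hmval]
  have hq : (0:ℝ) < (1 - r1) / ((K:ℝ) - 2 + r1) := div_pos (by linarith) hd
  have hL : (0:ℝ) < 3 + ((K:ℝ) - 1) * ((1 - r1) / ((K:ℝ) - 2 + r1)) := by nlinarith
  have hR : (0:ℝ) < 4 * ((K:ℝ) - 2 + r1) + 1 - (K:ℝ) * r1 := by nlinarith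
  rw [div_eq_div_iff hL.ne' hR.ne']
  field_simp
  ring
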